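/- Let 1 < p < ∞ and p* = p/(p−1), and define α_k = (k+1)^{1/p*} − k^{1/p*} for integers k ≥ 0. Then Σ_{k=0}^{n−1} α_k^p → ∞ as n → ∞; that is, the series Σ_{k=0}^∞ ((k+1)^{1/p*} − k^{1/p*})^p diverges. -/

import Mathlib

noncomputable section

open scoped BigOperators

/-- For `1 < p < ∞` and `p* = p/(p−1)`, the series
`∑ ((k+1)^{1/p*} − k^{1/p*})^p` diverges. -/
theorem sum_rpow_alpha_tendsto_atTop (p : ℝ) (hp : 1 < p) :
    Filter.Tendsto
      (fun n : ℕ => ∑ k ∈ Finset.range n,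
        (((k : ℝ) + 1) ^ (1 / (p / (p - 1))) - (k : ℝ) ^ (1 / (p / (p - 1)))) ^ p)
      Filter.atTop Filter.atTop := by
  have hp0 : (0:ℝ) < p := lt_trans one_pos hp
  have hp1 : (0:ℝ) < p - 1 := by linarith
  set s : ℝ := (p - 1) / p with hs
  have hseq : 1 / (p / (p - 1)) = s := by
    rw [hs]; field_simp
  have hs0 : 0 < s := div_pos hp1 hp0
  have hs1 : s < 1 := by
    rw [hs, div_lt_one hp0]; linarith
  -- key pointwise bound
  have hkey : ∀ k : ℕ, s ^ p * (1 / ((k:ℝ) + 1)) ≤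
      (((k:ℝ) + 1) ^ s - (k:ℝ) ^ s) ^ p := by
    intro k
    have ha : (0:ℝ) < (k:ℝ) + 1 := by positivity
    have hk0 : (0:ℝ) ≤ (k:ℝ) := Nat.cast_nonneg k
    -- AM-GM: k^s * (k+1)^(1-s) ≤ s*k + (1-s)*(k+1) = k + 1 - s
    have hamgm : (k:ℝ) ^ s * ((k:ℝ) + 1) ^ (1 - s) ≤ ((k:ℝ) + 1) - s := by
      have := Real.geom_mean_le_arith_mean2_weighted (le_of_lt hs0)
        (by linarith : (0:ℝ) ≤ 1 - s) hk0 (le_of_lt ha) (by ring)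
      calc (k:ℝ) ^ s * ((k:ℝ) + 1) ^ (1 - s) ≤ s * k + (1 - s) * ((k:ℝ) + 1) := this
        _ = ((k:ℝ) + 1) - s := by ring
    have h1 : s * ((k:ℝ) + 1) ^ (s - 1) ≤ ((k:ℝ) + 1) ^ s - (k:ℝ) ^ s := by
      have hmul : (k:ℝ) ^ s ≤ (((k:ℝ) + 1) - s) * ((k:ℝ) + 1) ^ (s - 1) := by
        have h2 := mul_le_mul_of_nonneg_right hamgm
          (le_of_lt (Real.rpow_pos_of_pos ha (s - 1)))
        calc (k:ℝ) ^ s = (k:ℝ) ^ s * (((k:ℝ) + 1) ^ (1 - s) * ((k:ℝ) + 1) ^ (s - 1)) := by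
              rw [← Real.rpow_add ha]; norm_num
          _ = (k:ℝ) ^ s * ((k:ℝ) + 1) ^ (1 - s) * ((k:ℝ) + 1) ^ (s - 1) := by ring
          _ ≤ (((k:ℝ) + 1) - s) * ((k:ℝ) + 1) ^ (s - 1) := h2
      have h3 : (((k:ℝ) + 1) - s) * ((k:ℝ) + 1) ^ (s - 1)
          = ((k:ℝ) + 1) ^ s - s * ((k:ℝ) + 1) ^ (s - 1) := by
        have : ((k:ℝ) + 1) * ((k:ℝ) + 1) ^ (s - 1) = ((k:ℝ) + 1) ^ s := by
          rw [← Real.rpow_one_add' (le_of_lt ha)]; ring_nf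
          intro h; linarith
        nlinarith [this]
      linarith [hmul, h3.le]
    -- now raise to power p
    have hL0 : (0:ℝ) ≤ s * ((k:ℝ) + 1) ^ (s - 1) := by positivity
    have hrpow := Real.rpow_le_rpow hL0 h1 (le_of_lt hp0)
    have heq : (s * ((k:ℝ) + 1) ^ (s - 1)) ^ p = s ^ p * (1 / ((k:ℝ) + 1)) := by
      rw [Real.mul_rpow (le_of_lt hs0) (le_of_lt (Real.rpow_pos_of_pos ha (s - 1))),
        ← Real.rpow_mul (le_of_lt ha)]
      have : (s - 1) * p = -1 := by
        rw [hs]; field_simp; ring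
      rw [this, Real.rpow_neg_one]
      norm_num
    rw [← heq]
    exact hrpow
  -- divergence of harmonic series
  have hharm := Real.tendsto_sum_range_one_div_nat_succ_atTop
  have hc : (0:ℝ) < s ^ p := Real.rpow_pos_of_pos hs0 p
  have htend : Filter.Tendsto (fun n : ℕ => s ^ p * ∑ k ∈ Finset.range n, 1 / ((k:ℝ) + 1))
      Filter.atTop Filter.atTop := hharm.const_mul_atTop hc
  apply Filter.tendsto_atTop_mono _ htend
  intro n
  rw [Finset.mul_sum]
  apply Finset.sum_le_sum
  intro k _
  rw [hseq]
  exact hkey k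

end
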